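/- Let E be a 2-coloured graph and let C be a complete collection of squares in E. Then for every path x ∈ E* there is a unique C-compatible coloured-graph morphism λ_x : E_{2,d*(x)} → E such that x traverses λ_x. -/

import Mathlib

/-- A 2-coloured graph: a directed graph `(E⁰, E¹, r, s)` together with a colour map
`c : E¹ → Bool` (`false` is the colour `c₁`, `true` the colour `c₂`). -/
structure TwoColouredGraph where
  V : Type
  Edge : Type
  r : Edge → V
  s : Edge → V
  c : Edge → Bool

/-- A coloured-graph morphism: a graph morphism preserving colours. -/
structure CGMor (F E : TwoColouredGraph) where
  onV : F.V → E.V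
  onE : F.Edge → E.Edge
  map_r : ∀ e, E.r (onE e) = onV (F.r e)
  map_s : ∀ e, E.s (onE e) = onV (F.s e)
  map_c : ∀ e, E.c (onE e) = F.c e

/-- `x` is a path (finite sequence of composable edges) with range `v`;
vertices are regarded as the paths of length 0. -/
def IsPathFrom (E : TwoColouredGraph) (v : E.V) (x : List E.Edge) : Prop :=
  (∀ e ∈ x.head?, E.r e = v) ∧ List.Chain' (fun e f => E.s e = E.r f) x

/-- The standard basis vectors `e₁, e₂` of `ℕ²`, indexed by colour. -/
def vec : Bool → ℕ × ℕ
  | false => (1, 0)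
  | true => (0, 1)

theorem le_add_vec (p : ℕ × ℕ) (i : Bool) : p ≤ p + vec i :=
  Prod.le_def.mpr ⟨Nat.le_add_right _ _, Nat.le_add_right _ _⟩

theorem zero_le2 (p : ℕ × ℕ) : (0 : ℕ × ℕ) ≤ p :=
  Prod.le_def.mpr ⟨Nat.zero_le _, Nat.zero_le _⟩

theorem le_self_add2 (p q : ℕ × ℕ) : p ≤ p + q :=
  Prod.le_def.mpr ⟨Nat.le_add_right _ _, Nat.le_add_right _ _⟩

/-- The model 2-coloured graph `E_{2,m}`: vertices `{n ∈ ℕ² : n ≤ m}` and, whenever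
`n, n + eᵢ ≤ m`, an edge `n + vᵢ` of colour `i` from `n + eᵢ` to `n`. -/
def model2 (m : ℕ × ℕ) : TwoColouredGraph where
  V := {n : ℕ × ℕ // n ≤ m}
  Edge := {p : (ℕ × ℕ) × Bool // p.1 + vec p.2 ≤ m}
  r e := ⟨e.1.1, (le_add_vec e.1.1 e.1.2).trans e.2⟩
  s e := ⟨e.1.1 + vec e.1.2, e.2⟩
  c e := e.1.2

/-- The degree `d*(x) ∈ ℕ²` of a path: the vector counting the edges of each colour. -/
def deg2 (E : TwoColouredGraph) (x : List E.Edge) : ℕ × ℕ :=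
  (x.map fun e => vec (E.c e)).sum

theorem deg2_take_add_drop (E : TwoColouredGraph) (x : List E.Edge) (n : ℕ) :
    deg2 E (x.take n) + deg2 E (x.drop n) = deg2 E x := by
  unfold deg2
  rw [← List.sum_append, ← List.map_append, List.take_append_drop]

theorem deg2_take_le (E : TwoColouredGraph) (x : List E.Edge) (n : ℕ) :
    deg2 E (x.take n) ≤ deg2 E x :=
  (le_self_add2 _ _).trans_eq (deg2_take_add_drop E x n)

theorem deg2_take_add_vec_le (E : TwoColouredGraph) (x : List E.Edge) (n : ℕ)
    (hn : n < x.length) :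
    deg2 E (x.take n) + vec (E.c (x.get ⟨n, hn⟩)) ≤ deg2 E x := by
  have hdrop : deg2 E (x.drop n) = vec (E.c (x.get ⟨n, hn⟩)) + deg2 E (x.drop (n + 1)) := by
    rw [deg2, deg2, List.drop_eq_getElem_cons hn, List.map_cons, List.sum_cons,
      List.get_eq_getElem]
  calc deg2 E (x.take n) + vec (E.c (x.get ⟨n, hn⟩))
      ≤ deg2 E (x.take n) + (vec (E.c (x.get ⟨n, hn⟩)) + deg2 E (x.drop (n + 1))) := by
        rw [← add_assoc]; exact le_self_add2 _ _
    _ = deg2 E x := by rw [← hdrop, deg2_take_add_drop]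

/-- `x` (a path with range `v`) traverses the coloured-graph morphism `λ : E_{2,m} → E`. -/
def Traverses2 (E : TwoColouredGraph) {m : ℕ × ℕ} (lam : CGMor (model2 m) E)
    (v : E.V) (x : List E.Edge) : Prop :=
  ∃ hd : deg2 E x = m,
    lam.onV ⟨0, zero_le2 m⟩ = v ∧
    ∀ (n : ℕ) (hn : n < x.length),
      lam.onE ⟨(deg2 E (x.take n), E.c (x.get ⟨n, hn⟩)),
        hd ▸ deg2_take_add_vec_le E x n hn⟩ = x.get ⟨n, hn⟩

/-- A square in `E`: a coloured-graph morphism `φ : E_{2,e₁+e₂} → E`. -/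
abbrev Square2 (E : TwoColouredGraph) := CGMor (model2 (1, 1)) E

/-- The edge `vᵢ` of `E_{2,e₁+e₂}` with range `0`, of colour `i`. -/
def sqEdge0 (i : Bool) : (model2 (1, 1)).Edge :=
  ⟨((0, 0), i), by cases i <;> decide⟩

/-- The edge `eᵢ + vⱼ` of `E_{2,e₁+e₂}` with range `eᵢ`, of the other colour `j = ¬i`. -/
def sqEdge1 (i : Bool) : (model2 (1, 1)).Edge :=
  ⟨(vec i, !i), by cases i <;> decide⟩

/-- A collection `C` of squares in `E` is complete if each two-coloured path of length 2 in `E`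
factors through a unique square in `C`. -/
def IsComplete2 (E : TwoColouredGraph) (C : Set (Square2 E)) : Prop :=
  ∀ x₁ x₂ : E.Edge, E.s x₁ = E.r x₂ → E.c x₁ ≠ E.c x₂ →
    ∃! φ : Square2 E, φ ∈ C ∧ x₁ = φ.onE (sqEdge0 (E.c x₁)) ∧ x₂ = φ.onE (sqEdge1 (E.c x₁))

theorem occ_vertex_le {z n m : ℕ × ℕ} (hz : z ≤ (1, 1)) (h : n + (1, 1) ≤ m) : z + n ≤ m :=
  le_trans (add_le_add_left hz n) (le_of_eq (add_comm _ _) |>.trans h)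

theorem occ_edge_le {u n m : ℕ × ℕ} {i : Bool} (hz : u + vec i ≤ (1, 1))
    (h : n + (1, 1) ≤ m) : (u + n) + vec i ≤ m := by
  rw [add_right_comm]
  exact occ_vertex_le hz h

/-- The square `φ` occurs in `λ : E_{2,m} → E` if `φ` is the translation of `λ` by some
`n ∈ ℕ²`, i.e. `φ(x) = λ(x + n)` on vertices and edges. -/
def Occurs2 {E : TwoColouredGraph} {m : ℕ × ℕ} (φ : Square2 E)
    (lam : CGMor (model2 m) E) : Prop :=
  ∃ (n : ℕ × ℕ) (h : n + (1, 1) ≤ m),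
    (∀ z : (model2 (1, 1)).V, lam.onV ⟨z.1 + n, occ_vertex_le z.2 h⟩ = φ.onV z) ∧
    (∀ e : (model2 (1, 1)).Edge,
      lam.onE ⟨(e.1.1 + n, e.1.2), occ_edge_le e.2 h⟩ = φ.onE e)

/-- `λ` is `C`-compatible if every square occurring in `λ` belongs to `C`. -/
def Compatible2 {E : TwoColouredGraph} (C : Set (Square2 E)) {m : ℕ × ℕ}
    (lam : CGMor (model2 m) E) : Prop :=
  ∀ φ : Square2 E, Occurs2 φ lam → φ ∈ C

/-- The restriction `λ|_{E_{2,p}}` of `λ : E_{2,q} → E` for `p ≤ q`. -/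
def restrict2 {E : TwoColouredGraph} {q : ℕ × ℕ} (lam : CGMor (model2 q) E)
    (p : ℕ × ℕ) (h : p ≤ q) : CGMor (model2 p) E where
  onV z := lam.onV ⟨z.1, z.2.trans h⟩
  onE e := lam.onE ⟨e.1, e.2.trans h⟩
  map_r e := lam.map_r _
  map_s e := lam.map_s _
  map_c e := lam.map_c _

/-- The translated restriction `λ|*_{E_{2,[p,p+n]}} : E_{2,n} → E`, `a ↦ λ(p + a)`,
of `λ : E_{2,q} → E` where `p + n ≤ q`. -/
def starRestrict2 {E : TwoColouredGraph} {q : ℕ × ℕ} (lam : CGMor (model2 q) E)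
    (p n : ℕ × ℕ) (h : p + n ≤ q) : CGMor (model2 n) E where
  onV z := lam.onV ⟨p + z.1, (add_le_add_right z.2 p).trans h⟩
  onE e := lam.onE ⟨(p + e.1.1, e.1.2), by
    rw [add_assoc]; exact (add_le_add_right e.2 p).trans h⟩
  map_r e := lam.map_r _
  map_s e := by
    refine (lam.map_s _).trans ?_
    exact congrArg lam.onV (Subtype.ext (add_assoc p e.1.1 (vec e.1.2)))
  map_c e := lam.map_c _

/-- The model graph `E_{2,0}` has no edges. -/
theorem model2_zero_no_edge (e : (model2 (0, 0)).Edge) : False := by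
  obtain ⟨⟨u, i⟩, h⟩ := e
  rw [Prod.le_def] at h
  cases i <;> simp [vec] at h

/-- The identity morphism `λ_v : E_{2,0} → E`, `λ_v(0) = v`. -/
def idMor2 (E : TwoColouredGraph) (v : E.V) : CGMor (model2 (0, 0)) E where
  onV _ := v
  onE e := (model2_zero_no_edge e).elim
  map_r e := (model2_zero_no_edge e).elim
  map_s e := (model2_zero_no_edge e).elim
  map_c e := (model2_zero_no_edge e).elim

theorem idMor2_compatible (E : TwoColouredGraph) (C : Set (Square2 E)) (v : E.V) :
    Compatible2 C (idMor2 E v) := by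
  rintro φ ⟨n, h, -, -⟩
  exact absurd h.2 (by simp)

/-- The set `Λ = ⋃_{m ∈ ℕ²} Λ^m` of all `C`-compatible coloured-graph morphisms into `E`. -/
def Lam2 (E : TwoColouredGraph) (C : Set (Square2 E)) : Type :=
  Σ m : ℕ × ℕ, {lam : CGMor (model2 m) E // Compatible2 C lam}

/-- The degree `d(λ) = m` of `λ : E_{2,m} → E`. -/
def Lam2.deg {E : TwoColouredGraph} {C : Set (Square2 E)} (α : Lam2 E C) : ℕ × ℕ := α.1

/-- The range `r(λ) = λ(0)`. -/
def Lam2.rV {E : TwoColouredGraph} {C : Set (Square2 E)} (α : Lam2 E C) : E.V :=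
  α.2.1.onV ⟨0, zero_le2 α.1⟩

/-- The source `s(λ) = λ(d(λ))`. -/
def Lam2.sV {E : TwoColouredGraph} {C : Set (Square2 E)} (α : Lam2 E C) : E.V :=
  α.2.1.onV ⟨α.1, le_refl α.1⟩

/-- The identity `λ_v` as an element of `Λ`. -/
def idLam2 (E : TwoColouredGraph) (C : Set (Square2 E)) (v : E.V) : Lam2 E C :=
  ⟨(0, 0), idMor2 E v, idMor2_compatible E C v⟩

/-- `γ` is the composition `μν`, i.e. `d(γ) = d(μ) + d(ν)`, `γ|_{E_{2,d(μ)}} = μ` and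
`γ|*_{E_{2,[d(μ), d(μ)+d(ν)]}} = ν`. -/
def IsComp2 {E : TwoColouredGraph} {C : Set (Square2 E)} (α β γ : Lam2 E C) : Prop :=
  ∃ h : γ.1 = α.1 + β.1,
    restrict2 γ.2.1 α.1 ((le_self_add2 α.1 β.1).trans_eq h.symm) = α.2.1 ∧
    starRestrict2 γ.2.1 α.1 β.1 h.ge = β.2.1

/-! ### Auxiliary development -/

theorem CGMor_ext {F E : TwoColouredGraph} {a b : CGMor F E}
    (h1 : a.onV = b.onV) (h2 : a.onE = b.onE) : a = b := by
  cases a; cases b; cases h1; cases h2; rfl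

/-- component of a pair indexed by a colour -/
def pget (p : ℕ × ℕ) : Bool → ℕ
  | false => p.1
  | true => p.2

/-- `t • vec b` -/
def tv : Bool → ℕ → ℕ × ℕ
  | false, t => (t, 0)
  | true, t => (0, t)

theorem pget_add (p q : ℕ × ℕ) (b : Bool) : pget (p + q) b = pget p b + pget q b := by
  cases b <;> rfl

theorem pget_sub (p q : ℕ × ℕ) (b : Bool) : pget (p - q) b = pget p b - pget q b := by
  cases b <;> rfl

theorem pget_vec (i b : Bool) : pget (vec i) b = if i = b then 1 else 0 := by
  cases i <;> cases b <;> rfl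

theorem pget_tv (b : Bool) (t : ℕ) (b' : Bool) :
    pget (tv b t) b' = if b = b' then t else 0 := by
  cases b <;> cases b' <;> rfl

theorem pget_zero (b : Bool) : pget 0 b = 0 := by cases b <;> rfl

theorem le2_iff {p q : ℕ × ℕ} : p ≤ q ↔ ∀ b, pget p b ≤ pget q b := by
  rw [Prod.le_def]
  constructor
  · rintro ⟨h1, h2⟩ b; cases b <;> assumption
  · intro h; exact ⟨h false, h true⟩

theorem eq2_of (p q : ℕ × ℕ) (h : ∀ b, pget p b = pget q b) : p = q :=
  Prod.ext (h false) (h true)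

theorem tv_not_zero_self (i : Bool) (t : ℕ) : pget (tv (!i) t) i = 0 := by
  cases i <;> rfl

theorem tv_not_get (i : Bool) (t : ℕ) : pget (tv (!i) t) (!i) = t := by
  cases i <;> rfl

theorem eq_tv_of_pget_zero {i : Bool} {p : ℕ × ℕ} (h : pget p i = 0) :
    p = tv (!i) (pget p (!i)) := by
  cases i <;> exact Prod.ext (by simp_all [pget, tv]) (by simp_all [pget, tv])

section RowExt

variable {E : TwoColouredGraph} {C : Set (Square2 E)}

theorem tv_le (i : Bool) (m : ℕ × ℕ) {t : ℕ} (h : t ≤ pget m (!i)) : tv (!i) t ≤ m := by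
  obtain ⟨m1, m2⟩ := m
  cases i <;> simp_all [tv, pget, Prod.le_def]

theorem tv_vec_le (i : Bool) (m : ℕ × ℕ) {t : ℕ} (h : t ≤ pget m (!i)) :
    tv (!i) t + vec i ≤ vec i + m := by
  obtain ⟨m1, m2⟩ := m
  cases i <;> simp_all [tv, vec, pget, Prod.le_def]

theorem tv_tvec_le (i : Bool) (m : ℕ × ℕ) {t : ℕ} (h : t + 1 ≤ pget m (!i)) :
    tv (!i) t + vec (!i) ≤ m := by
  obtain ⟨m1, m2⟩ := m
  cases i <;> simp_all [tv, vec, pget, Prod.le_def] <;> omega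

theorem tv_add_vec_not (i : Bool) (t : ℕ) : tv (!i) t + vec (!i) = tv (!i) (t + 1) := by
  cases i <;> simp [tv, vec, Prod.ext_iff]

/-- the vertex `λ'(min(t,M)·e_{¬i})` (clamped so it is defined for all `t`). -/
def Vtx (i : Bool) {m : ℕ × ℕ} (lam' : CGMor (model2 m) E) (t : ℕ) : E.V :=
  lam'.onV ⟨tv (!i) (min t (pget m (!i))), tv_le i m (min_le_right _ _)⟩

/-- the colour-`¬i` edge of `λ'` at position `t·e_{¬i}`. -/
def gEdge (i : Bool) {m : ℕ × ℕ} (lam' : CGMor (model2 m) E) (t : ℕ)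
    (h : t + 1 ≤ pget m (!i)) : E.Edge :=
  lam'.onE ⟨(tv (!i) t, !i), tv_tvec_le i m h⟩

theorem gEdge_c (i : Bool) {m : ℕ × ℕ} (lam' : CGMor (model2 m) E) (t : ℕ)
    (h : t + 1 ≤ pget m (!i)) : E.c (gEdge i lam' t h) = !i :=
  lam'.map_c _

theorem gEdge_r (i : Bool) {m : ℕ × ℕ} (lam' : CGMor (model2 m) E) (t : ℕ)
    (h : t + 1 ≤ pget m (!i)) : E.r (gEdge i lam' t h) = Vtx i lam' t := by
  rw [gEdge]; refine (lam'.map_r _).trans ?_; rw [Vtx]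
  exact congrArg lam'.onV (Subtype.ext (by
    show tv (!i) t = tv (!i) (min t (pget m (!i)))
    rw [min_eq_left (by omega)]))

theorem gEdge_s (i : Bool) {m : ℕ × ℕ} (lam' : CGMor (model2 m) E) (t : ℕ)
    (h : t + 1 ≤ pget m (!i)) : E.s (gEdge i lam' t h) = Vtx i lam' (t + 1) := by
  rw [gEdge]; refine (lam'.map_s _).trans ?_; rw [Vtx]
  exact congrArg lam'.onV (Subtype.ext (by
    show tv (!i) t + vec (!i) = tv (!i) (min (t+1) (pget m (!i)))
    rw [min_eq_left h, tv_add_vec_not]))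


/-- The unique square of `C` with first two edges `ed` (colour `i`) and the
colour-`¬i` edge of `λ'` at `t·e_{¬i}`. -/
noncomputable def stepSq (hC : IsComplete2 E C) (i : Bool) {m : ℕ × ℕ}
    (lam' : CGMor (model2 m) E) (t : ℕ) (h : t + 1 ≤ pget m (!i)) (ed : E.Edge)
    (hc : E.c ed = i) (hs : E.s ed = Vtx i lam' t) : Square2 E :=
  (hC ed (gEdge i lam' t h) (hs.trans (gEdge_r i lam' t h).symm)
     (by rw [hc, gEdge_c]; simp)).choose

theorem stepSq_spec (hC : IsComplete2 E C) (i : Bool) {m : ℕ × ℕ}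
    (lam' : CGMor (model2 m) E) (t : ℕ) (h : t + 1 ≤ pget m (!i)) (ed : E.Edge)
    (hc : E.c ed = i) (hs : E.s ed = Vtx i lam' t) :
    stepSq hC i lam' t h ed hc hs ∈ C ∧
      ed = (stepSq hC i lam' t h ed hc hs).onE (sqEdge0 i) ∧
      gEdge i lam' t h = (stepSq hC i lam' t h ed hc hs).onE (sqEdge1 i) := by
  subst hc
  exact (hC ed (gEdge _ lam' t h) (hs.trans (gEdge_r _ lam' t h).symm)
     (by rw [gEdge_c]; simp)).choose_spec.1

theorem stepSq_unique (hC : IsComplete2 E C) (i : Bool) {m : ℕ × ℕ}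
    (lam' : CGMor (model2 m) E) (t : ℕ) (h : t + 1 ≤ pget m (!i)) (ed : E.Edge)
    (hc : E.c ed = i) (hs : E.s ed = Vtx i lam' t) (ψ : Square2 E) (hψ : ψ ∈ C)
    (h1 : ed = ψ.onE (sqEdge0 i)) (h2 : gEdge i lam' t h = ψ.onE (sqEdge1 i)) :
    ψ = stepSq hC i lam' t h ed hc hs := by
  subst hc
  exact (hC ed (gEdge _ lam' t h) (hs.trans (gEdge_r _ lam' t h).symm)
     (by rw [gEdge_c]; simp)).choose_spec.2 ψ ⟨hψ, h1, h2⟩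

theorem vecs_le (i : Bool) : vec (!i) + vec i ≤ ((1 : ℕ), (1 : ℕ)) := by
  cases i <;> decide

/-- The colour-`i` edge of the square `stepSq` at position `e_{¬i}`. -/
noncomputable def nextEdge (hC : IsComplete2 E C) (i : Bool) {m : ℕ × ℕ}
    (lam' : CGMor (model2 m) E) (t : ℕ) (h : t + 1 ≤ pget m (!i)) (ed : E.Edge)
    (hc : E.c ed = i) (hs : E.s ed = Vtx i lam' t) : E.Edge :=
  (stepSq hC i lam' t h ed hc hs).onE ⟨(vec (!i), i), vecs_le i⟩

theorem nextEdge_c (hC : IsComplete2 E C) (i : Bool) {m : ℕ × ℕ}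
    (lam' : CGMor (model2 m) E) (t : ℕ) (h : t + 1 ≤ pget m (!i)) (ed : E.Edge)
    (hc : E.c ed = i) (hs : E.s ed = Vtx i lam' t) :
    E.c (nextEdge hC i lam' t h ed hc hs) = i :=
  (stepSq hC i lam' t h ed hc hs).map_c _

theorem nextEdge_s (hC : IsComplete2 E C) (i : Bool) {m : ℕ × ℕ}
    (lam' : CGMor (model2 m) E) (t : ℕ) (h : t + 1 ≤ pget m (!i)) (ed : E.Edge)
    (hc : E.c ed = i) (hs : E.s ed = Vtx i lam' t) :
    E.s (nextEdge hC i lam' t h ed hc hs) = Vtx i lam' (t + 1) := by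
  set φ := stepSq hC i lam' t h ed hc hs with hφ
  have h1 : E.s (nextEdge hC i lam' t h ed hc hs) = φ.onV ⟨vec (!i) + vec i, vecs_le i⟩ :=
    φ.map_s _
  have h2 : E.s (φ.onE (sqEdge1 i)) = φ.onV ⟨vec i + vec (!i), by cases i <;> decide⟩ :=
    φ.map_s _
  have h3 : (⟨vec (!i) + vec i, vecs_le i⟩ : (model2 ((1:ℕ),(1:ℕ))).V) =
      ⟨vec i + vec (!i), by cases i <;> decide⟩ := Subtype.ext (add_comm _ _)
  rw [h1, h3, ← h2, ← (stepSq_spec hC i lam' t h ed hc hs).2.2, gEdge_s]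

/-- The row of colour-`i` edges obtained by sliding `e0` along the bottom of `λ'`. -/
noncomputable def fRow (hC : IsComplete2 E C) (i : Bool) {m : ℕ × ℕ}
    (lam' : CGMor (model2 m) E) (e0 : E.Edge) (hce : E.c e0 = i)
    (hs0 : E.s e0 = Vtx i lam' 0) :
    (t : ℕ) → {ed : E.Edge // E.c ed = i ∧ E.s ed = Vtx i lam' t}
  | 0 => ⟨e0, hce, hs0⟩
  | t + 1 =>
    if h : t + 1 ≤ pget m (!i) then
      let p := fRow hC i lam' e0 hce hs0 t
      ⟨nextEdge hC i lam' t h p.1 p.2.1 p.2.2,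
        nextEdge_c hC i lam' t h p.1 p.2.1 p.2.2,
        nextEdge_s hC i lam' t h p.1 p.2.1 p.2.2⟩
    else
      let p := fRow hC i lam' e0 hce hs0 t
      ⟨p.1, p.2.1, p.2.2.trans (congrArg lam'.onV (Subtype.ext (by
        show tv (!i) (min t (pget m (!i))) = tv (!i) (min (t+1) (pget m (!i)))
        congr 1
        omega)))⟩

/-- The square used at step `t` in the construction of `fRow`. -/
noncomputable def rowSq (hC : IsComplete2 E C) (i : Bool) {m : ℕ × ℕ}
    (lam' : CGMor (model2 m) E) (e0 : E.Edge) (hce : E.c e0 = i)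
    (hs0 : E.s e0 = Vtx i lam' 0) (t : ℕ) (h : t + 1 ≤ pget m (!i)) : Square2 E :=
  stepSq hC i lam' t h (fRow hC i lam' e0 hce hs0 t).1
    (fRow hC i lam' e0 hce hs0 t).2.1 (fRow hC i lam' e0 hce hs0 t).2.2

theorem fRow_succ (hC : IsComplete2 E C) (i : Bool) {m : ℕ × ℕ}
    (lam' : CGMor (model2 m) E) (e0 : E.Edge) (hce : E.c e0 = i)
    (hs0 : E.s e0 = Vtx i lam' 0) (t : ℕ) (h : t + 1 ≤ pget m (!i)) :
    (fRow hC i lam' e0 hce hs0 (t + 1)).1 =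
      (rowSq hC i lam' e0 hce hs0 t h).onE ⟨(vec (!i), i), vecs_le i⟩ := by
  rw [fRow, dif_pos h]
  rfl

theorem rowSq_mem (hC : IsComplete2 E C) (i : Bool) {m : ℕ × ℕ}
    (lam' : CGMor (model2 m) E) (e0 : E.Edge) (hce : E.c e0 = i)
    (hs0 : E.s e0 = Vtx i lam' 0) (t : ℕ) (h : t + 1 ≤ pget m (!i)) :
    rowSq hC i lam' e0 hce hs0 t h ∈ C :=
  (stepSq_spec hC i lam' t h _ _ _).1

theorem rowSq_e (hC : IsComplete2 E C) (i : Bool) {m : ℕ × ℕ}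
    (lam' : CGMor (model2 m) E) (e0 : E.Edge) (hce : E.c e0 = i)
    (hs0 : E.s e0 = Vtx i lam' 0) (t : ℕ) (h : t + 1 ≤ pget m (!i)) :
    (fRow hC i lam' e0 hce hs0 t).1 = (rowSq hC i lam' e0 hce hs0 t h).onE (sqEdge0 i) :=
  (stepSq_spec hC i lam' t h _ _ _).2.1

theorem rowSq_g (hC : IsComplete2 E C) (i : Bool) {m : ℕ × ℕ}
    (lam' : CGMor (model2 m) E) (e0 : E.Edge) (hce : E.c e0 = i)
    (hs0 : E.s e0 = Vtx i lam' 0) (t : ℕ) (h : t + 1 ≤ pget m (!i)) :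
    gEdge i lam' t h = (rowSq hC i lam' e0 hce hs0 t h).onE (sqEdge1 i) :=
  (stepSq_spec hC i lam' t h _ _ _).2.2

/-- The new colour-`¬i` edge of the bottom row at position `t·e_{¬i}`. -/
noncomputable def newE (hC : IsComplete2 E C) (i : Bool) {m : ℕ × ℕ}
    (lam' : CGMor (model2 m) E) (e0 : E.Edge) (hce : E.c e0 = i)
    (hs0 : E.s e0 = Vtx i lam' 0) (t : ℕ) (h : t + 1 ≤ pget m (!i)) : E.Edge :=
  (rowSq hC i lam' e0 hce hs0 t h).onE (sqEdge0 (!i))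

theorem newE_c (hC : IsComplete2 E C) (i : Bool) {m : ℕ × ℕ}
    (lam' : CGMor (model2 m) E) (e0 : E.Edge) (hce : E.c e0 = i)
    (hs0 : E.s e0 = Vtx i lam' 0) (t : ℕ) (h : t + 1 ≤ pget m (!i)) :
    E.c (newE hC i lam' e0 hce hs0 t h) = !i :=
  (rowSq hC i lam' e0 hce hs0 t h).map_c _

theorem newE_r (hC : IsComplete2 E C) (i : Bool) {m : ℕ × ℕ}
    (lam' : CGMor (model2 m) E) (e0 : E.Edge) (hce : E.c e0 = i)
    (hs0 : E.s e0 = Vtx i lam' 0) (t : ℕ) (h : t + 1 ≤ pget m (!i)) :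
    E.r (newE hC i lam' e0 hce hs0 t h) = E.r (fRow hC i lam' e0 hce hs0 t).1 := by
  rw [newE, (rowSq hC i lam' e0 hce hs0 t h).map_r, rowSq_e hC i lam' e0 hce hs0 t h,
    (rowSq hC i lam' e0 hce hs0 t h).map_r]
  exact congrArg _ (Subtype.ext rfl)

theorem newE_s (hC : IsComplete2 E C) (i : Bool) {m : ℕ × ℕ}
    (lam' : CGMor (model2 m) E) (e0 : E.Edge) (hce : E.c e0 = i)
    (hs0 : E.s e0 = Vtx i lam' 0) (t : ℕ) (h : t + 1 ≤ pget m (!i)) :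
    E.s (newE hC i lam' e0 hce hs0 t h) = E.r (fRow hC i lam' e0 hce hs0 (t + 1)).1 := by
  rw [newE, (rowSq hC i lam' e0 hce hs0 t h).map_s,
    fRow_succ hC i lam' e0 hce hs0 t h]
  refine Eq.trans ?_ ((rowSq hC i lam' e0 hce hs0 t h).map_r _).symm
  exact congrArg _ (Subtype.ext (zero_add _))

end RowExt

section Arith

theorem ar1 {i : Bool} {z m : ℕ × ℕ} (hz : z ≤ vec i + m) (_ : pget z i ≠ 0) :
    z - vec i ≤ m := by
  obtain ⟨z1, z2⟩ := z; obtain ⟨m1, m2⟩ := m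
  cases i <;> simp_all [pget, vec, Prod.mk_add_mk, Prod.mk_sub_mk, Prod.mk_le_mk] <;> omega

theorem ar2 {i : Bool} {z m : ℕ × ℕ} (hz : z ≤ vec i + m) : pget z (!i) ≤ pget m (!i) := by
  obtain ⟨z1, z2⟩ := z; obtain ⟨m1, m2⟩ := m
  cases i <;> simp_all [pget, vec, Prod.mk_add_mk, Prod.mk_le_mk]

theorem ar3 {i : Bool} {p m : ℕ × ℕ} (hp : p + vec (!i) ≤ vec i + m) :
    pget p (!i) + 1 ≤ pget m (!i) := by
  obtain ⟨p1, p2⟩ := p; obtain ⟨m1, m2⟩ := m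
  cases i <;> simp_all [pget, vec, Prod.mk_add_mk, Prod.mk_le_mk]

theorem ar4 {i b : Bool} {p m : ℕ × ℕ} (hp : p + vec b ≤ vec i + m) (h0 : pget p i ≠ 0) :
    (p - vec i) + vec b ≤ m := by
  obtain ⟨p1, p2⟩ := p; obtain ⟨m1, m2⟩ := m
  cases i <;> cases b <;>
    simp_all [pget, vec, Prod.mk_add_mk, Prod.mk_sub_mk, Prod.mk_le_mk] <;> omega

theorem ar5 {i b : Bool} {p : ℕ × ℕ} (h0 : pget p i ≠ 0) :
    p + vec b - vec i = (p - vec i) + vec b := by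
  obtain ⟨p1, p2⟩ := p
  cases i <;> cases b <;>
    simp_all [pget, vec, Prod.mk_add_mk, Prod.mk_sub_mk, Prod.mk.injEq] <;> omega

theorem ar6 {i : Bool} (p : ℕ × ℕ) : p + vec i - vec i = p := by
  obtain ⟨p1, p2⟩ := p
  cases i <;> simp [pget, vec, Prod.mk_add_mk, Prod.mk_sub_mk]

theorem ar7 {i : Bool} {p : ℕ × ℕ} (h0 : pget p i = 0) {b : Bool} (hb : b ≠ i) :
    pget (p + vec b) i = 0 := by
  obtain ⟨p1, p2⟩ := p
  cases i <;> cases b <;> simp_all [pget, vec, Prod.mk_add_mk]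

theorem ar8 {i : Bool} {p : ℕ × ℕ} : pget (p + vec i) i ≠ 0 := by
  obtain ⟨p1, p2⟩ := p
  cases i <;> simp [pget, vec, Prod.mk_add_mk]

theorem bool_eq_not {b i : Bool} (h : ¬ b = i) : b = !i := by
  cases b <;> cases i <;> simp_all

end Arith


theorem ar9 {i : Bool} {p m : ℕ × ℕ} (h : p + vec i ≤ vec i + m) :
    pget p (!i) ≤ pget m (!i) := by
  obtain ⟨p1, p2⟩ := p; obtain ⟨m1, m2⟩ := m
  cases i <;> simp_all [pget, vec, Prod.mk_add_mk, Prod.mk_le_mk]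

theorem ar10 {i : Bool} (p : ℕ × ℕ) : pget (p + vec (!i)) (!i) = pget p (!i) + 1 := by
  obtain ⟨p1, p2⟩ := p
  cases i <;> simp [pget, vec, Prod.mk_add_mk]

section LamExt

variable {E : TwoColouredGraph} {C : Set (Square2 E)}

/-- The extension of `λ'` by the new bottom row generated by `e0`. -/
noncomputable def lamExt (hC : IsComplete2 E C) (i : Bool) {m : ℕ × ℕ}
    (lam' : CGMor (model2 m) E) (e0 : E.Edge) (hce : E.c e0 = i)
    (hs0 : E.s e0 = Vtx i lam' 0) : CGMor (model2 (vec i + m)) E where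
  onV z :=
    if h0 : pget z.1 i = 0 then E.r (fRow hC i lam' e0 hce hs0 (pget z.1 (!i))).1
    else lam'.onV ⟨z.1 - vec i, ar1 z.2 h0⟩
  onE ed :=
    if h0 : pget ed.1.1 i = 0 then
      if hb : ed.1.2 = i then (fRow hC i lam' e0 hce hs0 (pget ed.1.1 (!i))).1
      else newE hC i lam' e0 hce hs0 (pget ed.1.1 (!i))
        (ar3 (by rw [← bool_eq_not hb]; exact ed.2))
    else lam'.onE ⟨(ed.1.1 - vec i, ed.1.2), ar4 ed.2 h0⟩
  map_c := by
    rintro ⟨⟨p, b⟩, hle⟩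
    dsimp only [model2]
    split_ifs with h0 hb
    · rw [(fRow hC i lam' e0 hce hs0 (pget p (!i))).2.1, hb]
    · rw [newE_c, bool_eq_not hb]
    · exact lam'.map_c _
  map_r := by
    rintro ⟨⟨p, b⟩, hle⟩
    dsimp only [model2]
    split_ifs with h0 hb
    · exact Eq.symm (dif_pos h0)
    · exact (newE_r hC i lam' e0 hce hs0 _ _).trans (Eq.symm (dif_pos h0))
    · exact (lam'.map_r _).trans (Eq.symm (dif_neg h0))
  map_s := by
    rintro ⟨⟨p, b⟩, hle⟩
    dsimp only [model2]
    split_ifs with h0 hb hv hv hv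
    · -- b = i but target claimed new: contradiction
      rw [hb] at hv
      exact absurd hv ar8
    · -- new row, colour i edge: target is an old vertex
      have hle2 := hle
      rw [show (p, b).1 + vec (p, b).2 = p + vec b from rfl, hb] at hle2
      rw [(fRow hC i lam' e0 hce hs0 (pget p (!i))).2.2, Vtx]
      refine Eq.trans ?_ (dif_neg hv).symm
      refine congrArg lam'.onV (Subtype.ext ?_)
      show tv (!i) (min (pget p (!i)) (pget m (!i))) = p + vec b - vec i
      rw [hb, ar6, min_eq_left (ar9 hle2)]
      exact (eq_tv_of_pget_zero h0).symm
    · -- new row, colour ¬i edge: target is the next new vertex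
      have hidx : pget (p + vec b) (!i) = pget p (!i) + 1 := by
        rw [bool_eq_not hb]; exact ar10 p
      rw [hidx, ← newE_s hC i lam' e0 hce hs0 (pget p (!i))
        (ar3 (by rw [← bool_eq_not hb]; exact hle))]
      exact Eq.symm (dif_pos hv)
    · -- contradiction
      exact absurd (ar7 h0 hb) hv
    · -- old edge but target claimed new: contradiction
      rw [pget_add] at hv; omega
    · -- old edge
      refine (lam'.map_s _).trans (Eq.trans ?_ (dif_neg hv).symm)
      exact congrArg lam'.onV (Subtype.ext (ar5 h0).symm)

theorem lamExt_onV_row (hC : IsComplete2 E C) (i : Bool) {m : ℕ × ℕ}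
    (lam' : CGMor (model2 m) E) (e0 : E.Edge) (hce : E.c e0 = i)
    (hs0 : E.s e0 = Vtx i lam' 0) (z : (model2 (vec i + m)).V) (h0 : pget z.1 i = 0)
    (t : ℕ) (ht : pget z.1 (!i) = t) :
    (lamExt hC i lam' e0 hce hs0).onV z = E.r (fRow hC i lam' e0 hce hs0 t).1 := by
  subst ht
  show (if h0 : pget z.1 i = 0 then _ else _) = _
  rw [dif_pos h0]

theorem lamExt_onV_old (hC : IsComplete2 E C) (i : Bool) {m : ℕ × ℕ}
    (lam' : CGMor (model2 m) E) (e0 : E.Edge) (hce : E.c e0 = i)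
    (hs0 : E.s e0 = Vtx i lam' 0) (z : (model2 (vec i + m)).V) (h0 : pget z.1 i ≠ 0)
    (w : ℕ × ℕ) (hw : z.1 = vec i + w) (hwm : w ≤ m) :
    (lamExt hC i lam' e0 hce hs0).onV z = lam'.onV ⟨w, hwm⟩ := by
  show (if h0 : pget z.1 i = 0 then _ else _) = _
  rw [dif_neg h0]
  refine congrArg lam'.onV (Subtype.ext ?_)
  show z.1 - vec i = w
  rw [hw, add_comm, ar6]

theorem lamExt_onE_row_i (hC : IsComplete2 E C) (i : Bool) {m : ℕ × ℕ}
    (lam' : CGMor (model2 m) E) (e0 : E.Edge) (hce : E.c e0 = i)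
    (hs0 : E.s e0 = Vtx i lam' 0) (ed : (model2 (vec i + m)).Edge)
    (h0 : pget ed.1.1 i = 0) (hb : ed.1.2 = i) (t : ℕ) (ht : pget ed.1.1 (!i) = t) :
    (lamExt hC i lam' e0 hce hs0).onE ed = (fRow hC i lam' e0 hce hs0 t).1 := by
  subst ht
  show (if h0 : pget ed.1.1 i = 0 then if hb : ed.1.2 = i then _ else _ else _) = _
  rw [dif_pos h0, dif_pos hb]

theorem lamExt_onE_row_not (hC : IsComplete2 E C) (i : Bool) {m : ℕ × ℕ}
    (lam' : CGMor (model2 m) E) (e0 : E.Edge) (hce : E.c e0 = i)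
    (hs0 : E.s e0 = Vtx i lam' 0) (ed : (model2 (vec i + m)).Edge)
    (h0 : pget ed.1.1 i = 0) (hb : ed.1.2 = (!i)) (t : ℕ) (ht : pget ed.1.1 (!i) = t)
    (h : t + 1 ≤ pget m (!i)) :
    (lamExt hC i lam' e0 hce hs0).onE ed = newE hC i lam' e0 hce hs0 t h := by
  subst ht
  have hb' : ¬ ed.1.2 = i := by rw [hb]; simp
  show (if h0 : pget ed.1.1 i = 0 then if hb : ed.1.2 = i then _ else _ else _) = _
  rw [dif_pos h0, dif_neg hb']

theorem lamExt_onE_old (hC : IsComplete2 E C) (i : Bool) {m : ℕ × ℕ}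
    (lam' : CGMor (model2 m) E) (e0 : E.Edge) (hce : E.c e0 = i)
    (hs0 : E.s e0 = Vtx i lam' 0) (ed : (model2 (vec i + m)).Edge)
    (h0 : pget ed.1.1 i ≠ 0) (w : ℕ × ℕ) (hw : ed.1.1 = vec i + w)
    (hwe : w + vec ed.1.2 ≤ m) :
    (lamExt hC i lam' e0 hce hs0).onE ed = lam'.onE ⟨(w, ed.1.2), hwe⟩ := by
  show (if h0 : pget ed.1.1 i = 0 then if hb : ed.1.2 = i then _ else _ else _) = _
  rw [dif_neg h0]
  refine congrArg lam'.onE (Subtype.ext ?_)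
  show (ed.1.1 - vec i, ed.1.2) = (w, ed.1.2)
  rw [hw, add_comm, ar6]

/-- A square is determined by its action on edges. -/
theorem square_ext {E : TwoColouredGraph} {φ ψ : Square2 E} (h : φ.onE = ψ.onE) :
    φ = ψ := by
  refine CGMor_ext ?_ h
  funext z
  obtain ⟨⟨a, b⟩, hz⟩ := z
  have ha : a ≤ 1 := hz.1
  have hb : b ≤ 1 := hz.2
  have key : ∀ (ed : (model2 ((1:ℕ),(1:ℕ))).Edge),
      φ.onV ((model2 ((1:ℕ),(1:ℕ))).r ed) = ψ.onV ((model2 ((1:ℕ),(1:ℕ))).r ed) ∧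
      φ.onV ((model2 ((1:ℕ),(1:ℕ))).s ed) = ψ.onV ((model2 ((1:ℕ),(1:ℕ))).s ed) := by
    intro ed
    constructor
    · rw [← φ.map_r, ← ψ.map_r, h]
    · rw [← φ.map_s, ← ψ.map_s, h]
  interval_cases a <;> interval_cases b
  · exact (key (sqEdge0 false)).1
  · have := (key (sqEdge0 true)).2
    exact this
  · have := (key (sqEdge0 false)).2
    exact this
  · have := (key (sqEdge1 false)).2
    exact this


theorem arA {i c : Bool} {q : ℕ × ℕ} (h : q + vec c ≤ ((1:ℕ), (1:ℕ))) (hc : c = i) :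
    pget q i = 0 := by
  subst hc
  obtain ⟨q1, q2⟩ := q
  cases c <;>
    simp_all [pget, vec, Prod.mk_add_mk, Prod.le_def] <;> omega

theorem arB {q : ℕ × ℕ} {i : Bool} (h : pget q i = 0) (h2 : pget q (!i) = 0) :
    q = ((0:ℕ), (0:ℕ)) := by
  obtain ⟨q1, q2⟩ := q
  cases i <;> simp_all [pget, Prod.mk.injEq]

theorem arD {q : ℕ × ℕ} {i : Bool} (h : pget q i = 0) (h1 : pget q (!i) = 1) :
    q = vec (!i) := by
  obtain ⟨q1, q2⟩ := q
  cases i <;> simp_all [pget, vec, Prod.mk.injEq]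

theorem arE {c : Bool} {q : ℕ × ℕ} (h : q + vec c ≤ ((1:ℕ), (1:ℕ))) :
    pget q (!c) ≤ 1 := by
  obtain ⟨q1, q2⟩ := q
  cases c <;> simp_all [pget, vec, Prod.mk_add_mk, Prod.le_def] <;> omega

theorem ar11 {i : Bool} {n m : ℕ × ℕ} (hn : n + ((1:ℕ), (1:ℕ)) ≤ vec i + m) :
    pget n (!i) + 1 ≤ pget m (!i) := by
  obtain ⟨n1, n2⟩ := n; obtain ⟨m1, m2⟩ := m
  cases i <;> simp_all [pget, vec, Prod.mk_add_mk, Prod.le_def] <;> omega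

theorem ar13 {i : Bool} {n : ℕ × ℕ} (h0 : pget n i = 0) {q : ℕ × ℕ} (hq : pget q i = 0) :
    pget (q + n) i = 0 := by
  rw [pget_add, h0, hq]

section LamExt2

variable {E : TwoColouredGraph} {C : Set (Square2 E)}

theorem keyE (hC : IsComplete2 E C) (i : Bool) {m : ℕ × ℕ}
    (lam' : CGMor (model2 m) E) (e0 : E.Edge) (hce : E.c e0 = i)
    (hs0 : E.s e0 = Vtx i lam' 0) {n : ℕ × ℕ} (hn : n + ((1:ℕ), (1:ℕ)) ≤ vec i + m)
    (h0 : pget n i = 0) (ed : (model2 ((1:ℕ),(1:ℕ))).Edge) :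
    (lamExt hC i lam' e0 hce hs0).onE ⟨(ed.1.1 + n, ed.1.2), occ_edge_le ed.2 hn⟩ =
      (rowSq hC i lam' e0 hce hs0 (pget n (!i)) (ar11 hn)).onE ed := by
  obtain ⟨⟨q, c⟩, hle⟩ := ed
  dsimp only at *
  by_cases hc : c = i
  · have hq : pget q i = 0 := arA hle hc
    have hq2 : pget q (!i) ≤ 1 := by rw [← hc]; exact arE hle
    interval_cases hq3 : pget q (!i)
    · -- q = 0 : this is the edge sqEdge0 i
      rw [lamExt_onE_row_i hC i lam' e0 hce hs0 ⟨(q + n, c), occ_edge_le hle hn⟩ (ar13 h0 hq) hc (pget n (!i))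
        (by dsimp only; rw [pget_add, hq3, zero_add]),
        rowSq_e hC i lam' e0 hce hs0 (pget n (!i)) (ar11 hn)]
      exact congrArg _ (Subtype.ext (Prod.ext (arB hq hq3).symm hc.symm))
    · -- q = vec ¬i : the next colour-i edge
      rw [lamExt_onE_row_i hC i lam' e0 hce hs0 ⟨(q + n, c), occ_edge_le hle hn⟩ (ar13 h0 hq) hc (pget n (!i) + 1)
        (by dsimp only; rw [pget_add, hq3, add_comm]),
        fRow_succ hC i lam' e0 hce hs0 (pget n (!i)) (ar11 hn)]
      exact congrArg _ (Subtype.ext (Prod.ext (arD hq hq3).symm hc.symm))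
  · have hc' : c = !i := bool_eq_not hc
    have hq : pget q (!i) = 0 := arA hle hc'
    have hq2 : pget q i ≤ 1 := by
      have := arE hle
      rwa [hc', Bool.not_not] at this
    interval_cases hq3 : pget q i
    · -- q = 0 : the new edge of colour ¬i
      rw [lamExt_onE_row_not hC i lam' e0 hce hs0 ⟨(q + n, c), occ_edge_le hle hn⟩ (ar13 h0 hq3) hc'
        (pget n (!i)) (by dsimp only; rw [pget_add, hq, zero_add]) (ar11 hn), newE]
      exact congrArg _ (Subtype.ext (Prod.ext (arB hq3 hq).symm hc'.symm))
    · -- q = vec i : the λ'-edge of colour ¬i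
      have hq1 : q = vec i := by
        have := arD (i := !i) hq (by rwa [Bool.not_not])
        rwa [Bool.not_not] at this
      have hwe : n + vec c ≤ m := by
        rw [hc']
        rw [eq_tv_of_pget_zero h0]
        exact tv_tvec_le i m (ar11 hn)
      rw [lamExt_onE_old hC i lam' e0 hce hs0 ⟨(q + n, c), occ_edge_le hle hn⟩
        (by dsimp only; rw [pget_add, hq3]; omega) n (by show q + n = vec i + n; rw [hq1]) hwe]
      have hg : lam'.onE ⟨(n, c), hwe⟩ = gEdge i lam' (pget n (!i)) (ar11 hn) := by
        rw [gEdge]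
        exact congrArg _ (Subtype.ext (Prod.ext (eq_tv_of_pget_zero h0) hc'))
      rw [hg, rowSq_g hC i lam' e0 hce hs0 (pget n (!i)) (ar11 hn)]
      exact congrArg _ (Subtype.ext (Prod.ext hq1.symm hc'.symm))

theorem ar15 {i : Bool} {n m : ℕ × ℕ} (hn : n + ((1:ℕ),(1:ℕ)) ≤ vec i + m)
    (h0 : pget n i ≠ 0) : (n - vec i) + ((1:ℕ),(1:ℕ)) ≤ m := by
  obtain ⟨n1, n2⟩ := n; obtain ⟨m1, m2⟩ := m
  cases i <;>
    simp_all [pget, vec, Prod.mk_add_mk, Prod.mk_sub_mk, Prod.le_def] <;> omega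

theorem ar16 {i : Bool} {n : ℕ × ℕ} (h0 : pget n i ≠ 0) (z : ℕ × ℕ) :
    z + n = vec i + (z + (n - vec i)) := by
  obtain ⟨n1, n2⟩ := n; obtain ⟨z1, z2⟩ := z
  cases i <;>
    simp_all [pget, vec, Prod.mk_add_mk, Prod.mk_sub_mk, Prod.mk.injEq] <;> omega

theorem ar17 {i : Bool} {n : ℕ × ℕ} (h0 : pget n i ≠ 0) (z : ℕ × ℕ) :
    pget (z + n) i ≠ 0 := by
  rw [pget_add]; omega

theorem lamExt_compatible (hC : IsComplete2 E C) (i : Bool) {m : ℕ × ℕ}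
    (lam' : CGMor (model2 m) E) (e0 : E.Edge) (hce : E.c e0 = i)
    (hs0 : E.s e0 = Vtx i lam' 0) (hcomp : Compatible2 C lam') :
    Compatible2 C (lamExt hC i lam' e0 hce hs0) := by
  rintro φ ⟨n, hn, hV, hE⟩
  by_cases h0 : pget n i = 0
  · have : φ = rowSq hC i lam' e0 hce hs0 (pget n (!i)) (ar11 hn) :=
      square_ext (funext fun ed =>
        (hE ed).symm.trans (keyE hC i lam' e0 hce hs0 hn h0 ed))
    rw [this]
    exact rowSq_mem hC i lam' e0 hce hs0 _ _
  · apply hcomp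
    refine ⟨n - vec i, ar15 hn h0, fun z => ?_, fun ed => ?_⟩
    · rw [← hV z, lamExt_onV_old hC i lam' e0 hce hs0 ⟨z.1 + n, occ_vertex_le z.2 hn⟩ (ar17 h0 z.1)
        (z.1 + (n - vec i)) (ar16 h0 z.1) (occ_vertex_le z.2 (ar15 hn h0))]
    · rw [← hE ed, lamExt_onE_old hC i lam' e0 hce hs0 ⟨(ed.1.1 + n, ed.1.2), occ_edge_le ed.2 hn⟩ (ar17 h0 ed.1.1)
        (ed.1.1 + (n - vec i)) (ar16 h0 ed.1.1) (occ_edge_le ed.2 (ar15 hn h0))]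

theorem ar18 {i : Bool} (z : ℕ × ℕ) : pget (vec i + z) i ≠ 0 := by
  rw [pget_add, pget_vec, if_pos rfl]; omega

theorem lamExt_star (hC : IsComplete2 E C) (i : Bool) {m : ℕ × ℕ}
    (lam' : CGMor (model2 m) E) (e0 : E.Edge) (hce : E.c e0 = i)
    (hs0 : E.s e0 = Vtx i lam' 0) :
    starRestrict2 (lamExt hC i lam' e0 hce hs0) (vec i) m le_rfl = lam' := by
  refine CGMor_ext (funext fun z => ?_) (funext fun ed => ?_)
  · exact lamExt_onV_old hC i lam' e0 hce hs0 _ (ar18 z.1) z.1 rfl z.2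
  · exact lamExt_onE_old hC i lam' e0 hce hs0 _ (ar18 ed.1.1) ed.1.1 rfl ed.2

theorem lamExt_e0 (hC : IsComplete2 E C) (i : Bool) {m : ℕ × ℕ}
    (lam' : CGMor (model2 m) E) (e0 : E.Edge) (hce : E.c e0 = i)
    (hs0 : E.s e0 = Vtx i lam' 0) (ed : (model2 (vec i + m)).Edge)
    (h1 : ed.1.1 = 0) (h2 : ed.1.2 = i) :
    (lamExt hC i lam' e0 hce hs0).onE ed = e0 :=
  lamExt_onE_row_i hC i lam' e0 hce hs0 ed (by rw [h1, pget_zero]) h2 0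
    (by rw [h1, pget_zero])

theorem Vtx_zero (i : Bool) {m : ℕ × ℕ} (lam' : CGMor (model2 m) E) :
    Vtx i lam' 0 = lam'.onV ⟨0, zero_le2 m⟩ :=
  congrArg lam'.onV (Subtype.ext (by
    show tv (!i) (min 0 (pget m (!i))) = 0
    rw [Nat.min_eq_left (Nat.zero_le _)]
    cases i <;> rfl))

theorem ar19 {i : Bool} (m : ℕ × ℕ) : ((0:ℕ),(0:ℕ)) + vec i ≤ vec i + m := by
  obtain ⟨m1, m2⟩ := m
  cases i <;> simp [vec, Prod.mk_add_mk, Prod.le_def]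

theorem ar20 {i : Bool} {m : ℕ × ℕ} {t : ℕ} (h : t + 1 ≤ pget m (!i)) :
    tv (!i) t + ((1:ℕ),(1:ℕ)) ≤ vec i + m := by
  obtain ⟨m1, m2⟩ := m
  cases i <;> simp_all [pget, tv, vec, Prod.mk_add_mk, Prod.le_def] <;> omega

theorem ar21 {i : Bool} {p : ℕ × ℕ} (h0 : pget p i ≠ 0) : p = vec i + (p - vec i) := by
  obtain ⟨p1, p2⟩ := p
  cases i <;>
    simp_all [pget, vec, Prod.mk_add_mk, Prod.mk_sub_mk, Prod.mk.injEq] <;> omega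

theorem ar22 {i : Bool} {p m : ℕ × ℕ} (hz : p ≤ vec i + m) (h0 : pget p i = 0) :
    p + vec i ≤ vec i + m := by
  obtain ⟨p1, p2⟩ := p; obtain ⟨m1, m2⟩ := m
  cases i <;> simp_all [pget, vec, Prod.mk_add_mk, Prod.le_def] <;> omega

section LamExtUniq

variable {E : TwoColouredGraph} {C : Set (Square2 E)}

/-- The square of `μ` at position `n`. -/
def sqAt {q : ℕ × ℕ} (mu : CGMor (model2 q) E) (n : ℕ × ℕ)
    (h : n + ((1:ℕ),(1:ℕ)) ≤ q) : Square2 E :=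
  starRestrict2 mu n ((1:ℕ),(1:ℕ)) h

theorem sqAt_occurs {q : ℕ × ℕ} (mu : CGMor (model2 q) E) (n : ℕ × ℕ)
    (h : n + ((1:ℕ),(1:ℕ)) ≤ q) : Occurs2 (sqAt mu n h) mu := by
  refine ⟨n, h, fun z => ?_, fun ed => ?_⟩
  · exact congrArg mu.onV (Subtype.ext (add_comm z.1 n))
  · refine congrArg mu.onE (Subtype.ext ?_)
    show (ed.1.1 + n, ed.1.2) = (n + ed.1.1, ed.1.2)
    rw [add_comm]

theorem sqAt_onE {q : ℕ × ℕ} (mu : CGMor (model2 q) E) (n : ℕ × ℕ)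
    (h : n + ((1:ℕ),(1:ℕ)) ≤ q) (ed : (model2 ((1:ℕ),(1:ℕ))).Edge) :
    (sqAt mu n h).onE ed = mu.onE ⟨(n + ed.1.1, ed.1.2), by
      rw [add_assoc]; exact (add_le_add_right ed.2 n).trans h⟩ := rfl

theorem mu_row (hC : IsComplete2 E C) (i : Bool) {m : ℕ × ℕ}
    (lam' : CGMor (model2 m) E) (e0 : E.Edge) (hce : E.c e0 = i)
    (hs0 : E.s e0 = Vtx i lam' 0) (mu : CGMor (model2 (vec i + m)) E)
    (hmu : Compatible2 C mu) (hstar : starRestrict2 mu (vec i) m le_rfl = lam')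
    (he0 : mu.onE ⟨(((0:ℕ),(0:ℕ)), i), ar19 m⟩ = e0) :
    ∀ t : ℕ, ∀ ht : t ≤ pget m (!i),
      (mu.onE ⟨(tv (!i) t, i), tv_vec_le i m ht⟩ = (fRow hC i lam' e0 hce hs0 t).1) ∧
      (∀ h1 : t + 1 ≤ pget m (!i),
        sqAt mu (tv (!i) t) (ar20 h1) = rowSq hC i lam' e0 hce hs0 t h1) := by
  have key : ∀ t : ℕ, ∀ h1 : t + 1 ≤ pget m (!i),
      mu.onE ⟨(tv (!i) t, i), tv_vec_le i m (Nat.le_of_succ_le h1)⟩ =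
        (fRow hC i lam' e0 hce hs0 t).1 →
      sqAt mu (tv (!i) t) (ar20 h1) = rowSq hC i lam' e0 hce hs0 t h1 := by
    intro t h1 hrow
    refine stepSq_unique hC i lam' t h1 _ _ _ _ (hmu _ (sqAt_occurs mu _ _)) ?_ ?_
    · -- (fRow t).1 = sqAt.onE (sqEdge0 i)
      rw [← hrow]
      refine congrArg mu.onE (Subtype.ext ?_)
      show (tv (!i) t, i) = (tv (!i) t + ((0:ℕ),(0:ℕ)), i)
      refine Prod.ext ?_ rfl
      obtain ⟨a, b⟩ := tv (!i) t
      simp [Prod.mk_add_mk]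
    · -- gEdge = sqAt.onE (sqEdge1 i)
      have h2 : gEdge i lam' t h1 =
          (starRestrict2 mu (vec i) m le_rfl).onE ⟨(tv (!i) t, !i), tv_tvec_le i m h1⟩ := by
        rw [hstar]; rfl
      rw [h2]
      refine congrArg mu.onE (Subtype.ext ?_)
      show (vec i + tv (!i) t, (!i)) = (tv (!i) t + vec i, (!i))
      rw [add_comm]
  intro t
  induction t with
  | zero =>
    intro ht
    have hbase : mu.onE ⟨(tv (!i) 0, i), tv_vec_le i m ht⟩ =
        (fRow hC i lam' e0 hce hs0 0).1 := by
      have h3 : (fRow hC i lam' e0 hce hs0 0).1 = e0 := rfl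
      rw [h3, ← he0]
      exact congrArg mu.onE (Subtype.ext (by
        show (tv (!i) 0, i) = (((0:ℕ),(0:ℕ)), i)
        cases i <;> rfl))
    exact ⟨hbase, fun h1 => key 0 h1 hbase⟩
  | succ t ih =>
    intro ht
    have ht' : t ≤ pget m (!i) := by omega
    have h1 : t + 1 ≤ pget m (!i) := ht
    have hsq := key t h1 ((ih ht').1)
    have hnext : mu.onE ⟨(tv (!i) (t+1), i), tv_vec_le i m ht⟩ =
        (fRow hC i lam' e0 hce hs0 (t+1)).1 := by
      rw [fRow_succ hC i lam' e0 hce hs0 t h1, ← hsq]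
      refine Eq.trans ?_ (sqAt_onE _ _ _ _).symm
      exact congrArg mu.onE (Subtype.ext (by
        show (tv (!i) (t+1), i) = (tv (!i) t + vec (!i), i)
        rw [tv_add_vec_not]))
    exact ⟨hnext, fun h2 => key (t+1) h2 hnext⟩

theorem ar0 (p : ℕ × ℕ) : p + ((0:ℕ),(0:ℕ)) = p := by
  obtain ⟨a, b⟩ := p; simp [Prod.mk_add_mk]

theorem lamExt_unique (hC : IsComplete2 E C) (i : Bool) {m : ℕ × ℕ}
    (lam' : CGMor (model2 m) E) (e0 : E.Edge) (hce : E.c e0 = i)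
    (hs0 : E.s e0 = Vtx i lam' 0) (mu : CGMor (model2 (vec i + m)) E)
    (hmu : Compatible2 C mu) (hstar : starRestrict2 mu (vec i) m le_rfl = lam')
    (he0 : mu.onE ⟨(((0:ℕ),(0:ℕ)), i), ar19 m⟩ = e0) :
    mu = lamExt hC i lam' e0 hce hs0 := by
  have R := mu_row hC i lam' e0 hce hs0 mu hmu hstar he0
  refine CGMor_ext (funext fun z => ?_) (funext fun ed => ?_)
  · obtain ⟨p, hz⟩ := z
    by_cases h0 : pget p i = 0
    · have ht : pget p (!i) ≤ pget m (!i) := ar2 hz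
      have hedge : p + vec i ≤ vec i + m := ar22 hz h0
      have h4 : mu.onE ⟨(p, i), hedge⟩ = (fRow hC i lam' e0 hce hs0 (pget p (!i))).1 := by
        rw [← (R (pget p (!i)) ht).1]
        exact congrArg mu.onE (Subtype.ext (Prod.ext (eq_tv_of_pget_zero h0) rfl))
      calc mu.onV ⟨p, hz⟩ = E.r (mu.onE ⟨(p, i), hedge⟩) := (mu.map_r ⟨(p, i), hedge⟩).symm
        _ = E.r (fRow hC i lam' e0 hce hs0 (pget p (!i))).1 := by rw [h4]
        _ = (lamExt hC i lam' e0 hce hs0).onV ⟨p, hz⟩ :=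
          (lamExt_onV_row hC i lam' e0 hce hs0 ⟨p, hz⟩ h0 _ rfl).symm
    · have hw : p = vec i + (p - vec i) := ar21 h0
      have hsub : p - vec i ≤ m := ar1 hz h0
      calc mu.onV ⟨p, hz⟩
          = (starRestrict2 mu (vec i) m le_rfl).onV ⟨p - vec i, hsub⟩ :=
            congrArg mu.onV (Subtype.ext hw)
        _ = lam'.onV ⟨p - vec i, hsub⟩ := by rw [hstar]
        _ = (lamExt hC i lam' e0 hce hs0).onV ⟨p, hz⟩ :=
          (lamExt_onV_old hC i lam' e0 hce hs0 ⟨p, hz⟩ h0 (p - vec i) hw hsub).symm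
  · obtain ⟨⟨p, b⟩, hle⟩ := ed
    by_cases h0 : pget p i = 0
    · by_cases hb : b = i
      · have hle2 := hle
        rw [hb] at hle2
        have ht : pget p (!i) ≤ pget m (!i) := ar9 hle2
        calc mu.onE ⟨(p, b), hle⟩
            = mu.onE ⟨(tv (!i) (pget p (!i)), i), tv_vec_le i m ht⟩ :=
              congrArg mu.onE (Subtype.ext (Prod.ext (eq_tv_of_pget_zero h0) hb))
          _ = (fRow hC i lam' e0 hce hs0 (pget p (!i))).1 := (R _ ht).1
          _ = (lamExt hC i lam' e0 hce hs0).onE ⟨(p, b), hle⟩ :=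
            (lamExt_onE_row_i hC i lam' e0 hce hs0 ⟨(p, b), hle⟩ h0 hb _ rfl).symm
      · have hb' : b = !i := bool_eq_not hb
        have hle2 := hle
        rw [hb'] at hle2
        have ht : pget p (!i) + 1 ≤ pget m (!i) := ar3 hle2
        have hsq := (R (pget p (!i)) (Nat.le_of_succ_le ht)).2 ht
        calc mu.onE ⟨(p, b), hle⟩
            = (sqAt mu (tv (!i) (pget p (!i))) (ar20 ht)).onE (sqEdge0 (!i)) := by
              refine congrArg mu.onE (Subtype.ext ?_)
              show (p, b) = (tv (!i) (pget p (!i)) + ((0:ℕ),(0:ℕ)), !i)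
              refine Prod.ext ?_ hb'
              show p = tv (!i) (pget p (!i)) + ((0:ℕ),(0:ℕ))
              rw [ar0]
              exact eq_tv_of_pget_zero h0
          _ = (rowSq hC i lam' e0 hce hs0 (pget p (!i)) ht).onE (sqEdge0 (!i)) := by
              rw [hsq]
          _ = newE hC i lam' e0 hce hs0 (pget p (!i)) ht := rfl
          _ = (lamExt hC i lam' e0 hce hs0).onE ⟨(p, b), hle⟩ :=
            (lamExt_onE_row_not hC i lam' e0 hce hs0 ⟨(p, b), hle⟩ h0 hb' _ rfl ht).symm
    · have hw : p = vec i + (p - vec i) := ar21 h0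
      have hsub : (p - vec i) + vec b ≤ m := ar4 hle h0
      calc mu.onE ⟨(p, b), hle⟩
          = (starRestrict2 mu (vec i) m le_rfl).onE ⟨(p - vec i, b), hsub⟩ := by
            refine congrArg mu.onE (Subtype.ext ?_)
            show (p, b) = (vec i + (p - vec i), b)
            rw [← hw]
        _ = lam'.onE ⟨(p - vec i, b), hsub⟩ := by rw [hstar]
        _ = (lamExt hC i lam' e0 hce hs0).onE ⟨(p, b), hle⟩ :=
          (lamExt_onE_old hC i lam' e0 hce hs0 ⟨(p, b), hle⟩ h0 (p - vec i) hw hsub).symm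

end LamExtUniq

theorem ar26 (v : ℕ × ℕ) : v + ((0:ℕ),(0:ℕ)) = ((0:ℕ),(0:ℕ)) + v := by
  obtain ⟨a, b⟩ := v; simp [Prod.mk_add_mk]

/-- A square occurring in a translated restriction occurs in the original morphism. -/
theorem occurs_star {E : TwoColouredGraph} {q : ℕ × ℕ} (mu : CGMor (model2 q) E)
    (p w : ℕ × ℕ) (hpw : p + w ≤ q) (φ : Square2 E)
    (h : Occurs2 φ (starRestrict2 mu p w hpw)) : Occurs2 φ mu := by
  obtain ⟨n, hn, hV, hE⟩ := h
  refine ⟨p + n, by rw [add_assoc]; exact (add_le_add_right hn p).trans hpw,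
    fun z => ?_, fun ed => ?_⟩
  · rw [← hV z]
    exact congrArg mu.onV (Subtype.ext (add_left_comm z.1 p n))
  · rw [← hE ed]
    refine congrArg mu.onE (Subtype.ext ?_)
    show (ed.1.1 + (p + n), ed.1.2) = (p + (ed.1.1 + n), ed.1.2)
    rw [add_left_comm]

-- Statement 0
theorem unique_traversal_2 (E : TwoColouredGraph) (C : Set (Square2 E))
    (hC : IsComplete2 E C) (v : E.V) (x : List E.Edge) (hx : IsPathFrom E v x) :
    ∃! lam : CGMor (model2 (deg2 E x)) E, Compatible2 C lam ∧ Traverses2 E lam v x := by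
  induction x generalizing v with
  | nil =>
    refine ⟨idMor2 E v, ⟨idMor2_compatible E C v, rfl, rfl, fun n hn => absurd hn (by simp)⟩,
      ?_⟩
    rintro lam ⟨-, -, hv0, -⟩
    refine CGMor_ext (funext fun z => ?_) (funext fun ed => (model2_zero_no_edge ed).elim)
    have hz : z = ⟨0, zero_le2 _⟩ := Subtype.ext (le_antisymm z.2 (zero_le2 _))
    rw [hz, hv0]
    rfl
  | cons e x' ih =>
    obtain ⟨hhead, hchain⟩ := hx
    obtain ⟨h1, h2⟩ := List.isChain_cons.mp hchain
    obtain ⟨lam', ⟨hcomp', hd', hv0', hedges'⟩, huniq'⟩ :=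
      ih (E.s e) ⟨fun f hf => (h1 f hf).symm, h2⟩
    have hdeg : deg2 E (e :: x') = vec (E.c e) + deg2 E x' := by simp [deg2]
    rw [hdeg]
    have hs0 : E.s e = Vtx (E.c e) lam' 0 := by rw [Vtx_zero]; exact hv0'.symm
    have hn0 : 0 < (e :: x').length := by simp
    refine ⟨lamExt hC (E.c e) lam' e rfl hs0,
      ⟨lamExt_compatible hC (E.c e) lam' e rfl hs0 hcomp', hdeg, ?_, ?_⟩, ?_⟩
    · -- range vertex
      rw [lamExt_onV_row hC (E.c e) lam' e rfl hs0 ⟨0, zero_le2 _⟩ (pget_zero _) 0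
        (pget_zero _)]
      exact hhead e rfl
    · -- edges along the path
      intro n hn
      cases n with
      | zero =>
        exact lamExt_e0 hC (E.c e) lam' e rfl hs0 _ rfl rfl
      | succ n =>
        have hn' : n < x'.length := by simpa using hn
        show (starRestrict2 (lamExt hC (E.c e) lam' e rfl hs0) (vec (E.c e)) (deg2 E x')
            le_rfl).onE
          ⟨(deg2 E (List.take n x'), E.c (x'.get ⟨n, hn'⟩)),
            hd' ▸ deg2_take_add_vec_le E x' n hn'⟩ = x'.get ⟨n, hn'⟩
        rw [lamExt_star hC (E.c e) lam' e rfl hs0]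
        exact hedges' n hn'
    · -- uniqueness
      rintro mu ⟨hcm, hd2, hv2, he2⟩
      have he0 : mu.onE ⟨(((0:ℕ),(0:ℕ)), E.c e), ar19 (deg2 E x')⟩ = e := he2 0 hn0
      have hstar : starRestrict2 mu (vec (E.c e)) (deg2 E x') le_rfl = lam' := by
        apply huniq'
        refine ⟨fun φ hφ => hcm φ (occurs_star mu _ _ le_rfl φ hφ), rfl, ?_, ?_⟩
        · -- range vertex of the restriction
          calc (starRestrict2 mu (vec (E.c e)) (deg2 E x') le_rfl).onV ⟨0, zero_le2 _⟩
              = mu.onV ⟨((0:ℕ),(0:ℕ)) + vec (E.c e), ar19 (deg2 E x')⟩ :=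
                congrArg mu.onV (Subtype.ext (ar26 (vec (E.c e))))
            _ = E.s (mu.onE ⟨(((0:ℕ),(0:ℕ)), E.c e), ar19 (deg2 E x')⟩) :=
                (mu.map_s ⟨(((0:ℕ),(0:ℕ)), E.c e), ar19 (deg2 E x')⟩).symm
            _ = E.s e := by rw [he0]
        · intro n hn'
          exact he2 (n + 1) (by simpa using hn')
      exact lamExt_unique hC (E.c e) lam' e rfl hs0 mu hcm hstar he0
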